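/- Let τ > 0, κ ∈ ℝ, and let a ∈ ℝ^{N_a}, b ∈ ℝ^{N_b}, c ∈ ℝ^{N_c} be the projected coordinates of three polygons (N_a, N_b, N_c ≥ 1). Define the two directional terms ρ̃_1 = m̃in_τ(b) − m̃ax_τ(a) − κ and ρ̃_2 = m̃in_τ(c) − m̃ax_τ(b) − κ, and the smoothed Between robustness ρ̃ = m̃in_τ(ρ̃_1, ρ̃_2) (smooth minimum of the pair), where m̃ax_τ(x) = τ·log(∑ exp(x_i/τ)) and m̃in_τ(x) = −m̃ax_τ(−x). Define the exact robustness ρ = min( min_i(b_i) − max_i(a_i) − κ, min_i(c_i) − max_i(b_i) − κ ). Then ρ̃ ≤ ρ; in particular ρ̃ > 0 implies ρ > 0. -/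
import Mathlib


/-- LogSumExp smooth maximum with temperature `τ`. -/
noncomputable def smoothMax (τ : ℝ) {N : ℕ} (x : Fin N → ℝ) : ℝ :=
  τ * Real.log (∑ i, Real.exp (x i / τ))

/-- LogSumExp smooth minimum with temperature `τ`: `smoothMin τ x = −smoothMax τ (−x)`. -/
noncomputable def smoothMin (τ : ℝ) {N : ℕ} (x : Fin N → ℝ) : ℝ :=
  -smoothMax τ (fun i => -x i)

/-- Binary LogSumExp smooth minimum. -/
noncomputable def smoothMin2 (τ a b : ℝ) : ℝ :=
  smoothMin τ (fun i : Fin 2 => if i = 0 then a else b)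


lemma le_smoothMax (τ : ℝ) (hτ : 0 < τ) {N : ℕ} (x : Fin N → ℝ) (j : Fin N) :
    x j ≤ smoothMax τ x := by
  have h1 : Real.exp (x j / τ) ≤ ∑ i, Real.exp (x i / τ) :=
    Finset.single_le_sum (f := fun i => Real.exp (x i / τ)) (fun i _ => (Real.exp_pos _).le) (Finset.mem_univ j)
  have h2 : x j / τ ≤ Real.log (∑ i, Real.exp (x i / τ)) := by
    calc x j / τ = Real.log (Real.exp (x j / τ)) := (Real.log_exp _).symm
    _ ≤ _ := Real.log_le_log (Real.exp_pos _) h1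
  have := mul_le_mul_of_nonneg_left h2 hτ.le
  rw [mul_div_cancel₀ _ hτ.ne'] at this
  exact this

lemma smoothMin_le (τ : ℝ) (hτ : 0 < τ) {N : ℕ} (x : Fin N → ℝ) (j : Fin N) :
    smoothMin τ x ≤ x j := by
  have := le_smoothMax τ hτ (fun i => -x i) j
  simp only [smoothMin]
  linarith

/-- Theorem 1, Case (i) for the Between predicate: with
`ρ̃₁ = smoothMin τ b − smoothMax τ a − κ`, `ρ̃₂ = smoothMin τ c − smoothMax τ b − κ`,
and `ρ̃ = smoothMin τ (ρ̃₁, ρ̃₂)`, the nested smoothed robustness `ρ̃` never exceeds the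
exact robustness `ρ = min(min b − max a − κ, min c − max b − κ)`;
in particular `ρ̃ > 0 → ρ > 0`. -/
theorem between_conservative (Na Nb Nc : ℕ) (hNa : 1 ≤ Na) (hNb : 1 ≤ Nb) (hNc : 1 ≤ Nc)
    (τ : ℝ) (hτ : 0 < τ) (κ : ℝ)
    (a : Fin Na → ℝ) (b : Fin Nb → ℝ) (c : Fin Nc → ℝ) :
    smoothMin2 τ (smoothMin τ b - smoothMax τ a - κ) (smoothMin τ c - smoothMax τ b - κ)
      ≤ min
        (Finset.univ.inf' (Finset.univ_nonempty_iff.mpr (Fin.pos_iff_nonempty.mp hNb)) b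
          - Finset.univ.sup' (Finset.univ_nonempty_iff.mpr (Fin.pos_iff_nonempty.mp hNa)) a - κ)
        (Finset.univ.inf' (Finset.univ_nonempty_iff.mpr (Fin.pos_iff_nonempty.mp hNc)) c
          - Finset.univ.sup' (Finset.univ_nonempty_iff.mpr (Fin.pos_iff_nonempty.mp hNb)) b - κ) ∧
    (0 < smoothMin2 τ (smoothMin τ b - smoothMax τ a - κ)
          (smoothMin τ c - smoothMax τ b - κ) →
      0 < min
        (Finset.univ.inf' (Finset.univ_nonempty_iff.mpr (Fin.pos_iff_nonempty.mp hNb)) b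
          - Finset.univ.sup' (Finset.univ_nonempty_iff.mpr (Fin.pos_iff_nonempty.mp hNa)) a - κ)
        (Finset.univ.inf' (Finset.univ_nonempty_iff.mpr (Fin.pos_iff_nonempty.mp hNc)) c
          - Finset.univ.sup' (Finset.univ_nonempty_iff.mpr (Fin.pos_iff_nonempty.mp hNb)) b - κ)) := by

  have key : smoothMin2 τ (smoothMin τ b - smoothMax τ a - κ) (smoothMin τ c - smoothMax τ b - κ)
      ≤ min
        (Finset.univ.inf' (Finset.univ_nonempty_iff.mpr (Fin.pos_iff_nonempty.mp hNb)) b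
          - Finset.univ.sup' (Finset.univ_nonempty_iff.mpr (Fin.pos_iff_nonempty.mp hNa)) a - κ)
        (Finset.univ.inf' (Finset.univ_nonempty_iff.mpr (Fin.pos_iff_nonempty.mp hNc)) c
          - Finset.univ.sup' (Finset.univ_nonempty_iff.mpr (Fin.pos_iff_nonempty.mp hNb)) b - κ) := by
    have hMaxA : Finset.univ.sup' (Finset.univ_nonempty_iff.mpr (Fin.pos_iff_nonempty.mp hNa)) a
        ≤ smoothMax τ a := Finset.sup'_le _ _ (fun j _ => le_smoothMax τ hτ a j)
    have hMaxB : Finset.univ.sup' (Finset.univ_nonempty_iff.mpr (Fin.pos_iff_nonempty.mp hNb)) b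
        ≤ smoothMax τ b := Finset.sup'_le _ _ (fun j _ => le_smoothMax τ hτ b j)
    have hMinB : smoothMin τ b
        ≤ Finset.univ.inf' (Finset.univ_nonempty_iff.mpr (Fin.pos_iff_nonempty.mp hNb)) b :=
      Finset.le_inf' _ _ (fun j _ => smoothMin_le τ hτ b j)
    have hMinC : smoothMin τ c
        ≤ Finset.univ.inf' (Finset.univ_nonempty_iff.mpr (Fin.pos_iff_nonempty.mp hNc)) c :=
      Finset.le_inf' _ _ (fun j _ => smoothMin_le τ hτ c j)
    have h0 := smoothMin_le τ hτ
      (fun i : Fin 2 => if i = 0 then (smoothMin τ b - smoothMax τ a - κ)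
        else (smoothMin τ c - smoothMax τ b - κ)) 0
    have h1 := smoothMin_le τ hτ
      (fun i : Fin 2 => if i = 0 then (smoothMin τ b - smoothMax τ a - κ)
        else (smoothMin τ c - smoothMax τ b - κ)) 1
    simp only at h0 h1
    apply le_min
    · calc smoothMin2 τ _ _ ≤ smoothMin τ b - smoothMax τ a - κ := h0
        _ ≤ _ := by linarith
    · calc smoothMin2 τ _ _ ≤ smoothMin τ c - smoothMax τ b - κ := h1
        _ ≤ _ := by linarith
  exact ⟨key, fun h => lt_of_lt_of_le h key⟩
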